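/- (Reachability Lemma) Let (G_α)_{α∈addr(t)} be a concrete evaluation of a tree t ∈ T_Σ into a graph G, with G_α = (V_α, E_α, lab_α, port_α) for each α. Then for every address α ∈ addr(t), G_α equals G↓port_α, the subgraph of G induced by the set of nodes reachable in G via directed paths from the nodes of port_α, with port sequence port_α. -/

import Mathlib

structure PortGraph (ν Ld Lb : Type) where
  V : Set ν
  E : Set (ν × Lb × ν)
  lab : ν → Ld
  port : List ν

def PortGraph.IsEmptyGraph {ν Ld Lb : Type} (G : PortGraph ν Ld Lb) : Prop :=
  G.V = ∅ ∧ G.E = ∅ ∧ G.port = []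

def CloneWitness {ν Ld Lb : Type} (G : PortGraph ν Ld Lb) (C : Set ν) (Cv : ν → Set ν)
    (G' : PortGraph ν Ld Lb) : Prop :=
  (∀ v, v ∈ G.V → v ∉ C → Cv v = {v}) ∧
  (∀ u v, u ∈ G.V → v ∈ G.V → u ≠ v → Disjoint (Cv u) (Cv v)) ∧
  G'.V = (⋃ v ∈ G.V, Cv v) ∧
  G'.E = {e | ∃ u ℓ w, (u, ℓ, w) ∈ G.E ∧ e.1 ∈ Cv u ∧ e.2.1 = ℓ ∧ e.2.2 ∈ Cv w} ∧
  (∀ v, v ∈ G.V → ∀ v' ∈ Cv v, G'.lab v' = G.lab v) ∧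
  G'.port = G.port

def Clone {ν Ld Lb : Type} (G : PortGraph ν Ld Lb) (C : Set ν) : Set (PortGraph ν Ld Lb) :=
  {G' | ∃ Cv, CloneWitness G C Cv G'}

structure ExpOp (ν Ld Lb : Type) where
  V : Set ν
  E : Set (ν × Lb × ν)
  lab : ν → Ld
  port : List ν
  dock : List ν
  C : Set ν
  E_sub : ∀ e ∈ E, e.1 ∈ V ∧ e.2.2 ∈ V
  port_nodup : port.Nodup
  dock_nodup : dock.Nodup
  port_sub : ∀ v ∈ port, v ∈ V
  dock_sub : ∀ v ∈ dock, v ∈ V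
  C_sub : C ⊆ V \ ({v | v ∈ port} ∪ {v | v ∈ dock})

namespace ExpOp
variable {ν Ld Lb : Type}

def und (Φ : ExpOp ν Ld Lb) : PortGraph ν Ld Lb := ⟨Φ.V, Φ.E, Φ.lab, Φ.port⟩

def NEW (Φ : ExpOp ν Ld Lb) : Set ν := {v | v ∈ Φ.port} \ {v | v ∈ Φ.dock}

def CONT (Φ : ExpOp ν Ld Lb) : Set ν := Φ.V \ ({v | v ∈ Φ.port} ∪ {v | v ∈ Φ.dock})

/-- (R1): every edge source lies in NEW. -/
def R1 (Φ : ExpOp ν Ld Lb) : Prop := ∀ e ∈ Φ.E, e.1 ∈ Φ.NEW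

/-- (R2): every dock node that is not a port is the target of some edge. -/
def R2 (Φ : ExpOp ν Ld Lb) : Prop := ∀ v ∈ Φ.dock, v ∉ Φ.port → ∃ e ∈ Φ.E, e.2.2 = v

/-- (R3): no isolated context nodes. -/
def R3 (Φ : ExpOp ν Ld Lb) : Prop := ∀ v ∈ Φ.V, v ∉ Φ.port → ∃ e ∈ Φ.E, e.2.2 = v

end ExpOp

def Apply {ν Ld Lb : Type} (Φ : ExpOp ν Ld Lb) (G H : PortGraph ν Ld Lb) : Prop :=
  G.port.length = Φ.dock.length ∧
  ∃ (Cv : ν → Set ν) (G'' : PortGraph ν Ld Lb) (μ : ν → ν),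
    CloneWitness Φ.und Φ.C Cv G'' ∧
    Set.InjOn μ G''.V ∧
    (∀ v ∈ Φ.NEW, μ v ∉ G.V) ∧
    Φ.dock.map μ = G.port ∧
    (∀ v ∈ Φ.CONT, ∀ v' ∈ Cv v, μ v' ∈ G.V ∧ μ v' ∉ {x | x ∈ G.port} ∧
      G.lab (μ v') = Φ.lab v) ∧
    H.V = G.V ∪ μ '' G''.V ∧
    H.E = G.E ∪ {e | ∃ e' ∈ G''.E, e = (μ e'.1, e'.2.1, μ e'.2.2)} ∧
    (∀ v ∈ G.V, H.lab v = G.lab v) ∧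
    (∀ v' ∈ G''.V, μ v' ∉ G.V → H.lab (μ v') = G''.lab v') ∧
    H.port = G''.port.map μ

def UnionOf {ν Ld Lb : Type} (G₁ G₂ H : PortGraph ν Ld Lb) : Prop :=
  Disjoint G₁.V G₂.V ∧
  H.V = G₁.V ∪ G₂.V ∧
  H.E = G₁.E ∪ G₂.E ∧
  (∀ v ∈ G₁.V, H.lab v = G₁.lab v) ∧
  (∀ v ∈ G₂.V, H.lab v = G₂.lab v) ∧
  H.port = G₁.port ++ G₂.port

def Subgraph {ν Ld Lb : Type} (G' G : PortGraph ν Ld Lb) : Prop :=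
  G'.V ⊆ G.V ∧ G'.E ⊆ G.E ∧ (∀ v ∈ G'.V, G'.lab v = G.lab v)

def PortGraph.step {ν Ld Lb : Type} (G : PortGraph ν Ld Lb) (u v : ν) : Prop :=
  ∃ ℓ, (u, ℓ, v) ∈ G.E

/-- Nodes reachable in `G` by directed paths from the nodes occurring in `p`. -/
def PortGraph.reachSet {ν Ld Lb : Type} (G : PortGraph ν Ld Lb) (p : List ν) : Set ν :=
  {v | ∃ u ∈ p, Relation.ReflTransGen G.step u v}

/-- `G↓p`: the subgraph of `G` induced by the nodes reachable from `p`, with port sequence `p`. -/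
def PortGraph.restrictReach {ν Ld Lb : Type} (G : PortGraph ν Ld Lb) (p : List ν) : PortGraph ν Ld Lb :=
  ⟨G.reachSet p, {e | e ∈ G.E ∧ e.1 ∈ G.reachSet p ∧ e.2.2 ∈ G.reachSet p}, G.lab, p⟩

inductive OpTree (ν Ld Lb : Type) : Type where
  | phi : OpTree ν Ld Lb
  | ext : ExpOp ν Ld Lb → OpTree ν Ld Lb → OpTree ν Ld Lb
  | union : OpTree ν Ld Lb → OpTree ν Ld Lb → OpTree ν Ld Lb

namespace OpTree
variable {ν Ld Lb : Type}

def subtree : OpTree ν Ld Lb → List ℕ → Option (OpTree ν Ld Lb)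
  | t, [] => some t
  | .ext _ t, 1 :: α => t.subtree α
  | .union t₁ _, 1 :: α => t₁.subtree α
  | .union _ t₂, 2 :: α => t₂.subtree α
  | _, _ => none

def Addr (t : OpTree ν Ld Lb) (α : List ℕ) : Prop := (t.subtree α).isSome

def ops : OpTree ν Ld Lb → Set (ExpOp ν Ld Lb)
  | .phi => ∅
  | .ext Φ t => insert Φ t.ops
  | .union t₁ t₂ => t₁.ops ∪ t₂.ops

end OpTree

/-- A concrete evaluation of the tree `t` into the graph `G`: a family of subgraphs of `G`
(indexed by Gorn addresses, with no renaming of nodes) with `ev [] = G`, respecting the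
operations labelling `t`. -/
def ConcreteEval {ν Ld Lb : Type} (t : OpTree ν Ld Lb) (G : PortGraph ν Ld Lb)
    (ev : List ℕ → PortGraph ν Ld Lb) : Prop :=
  ev [] = G ∧
  ∀ α, t.Addr α →
    Subgraph (ev α) G ∧
    (t.subtree α = some .phi → (ev α).IsEmptyGraph) ∧
    (∀ Φ t', t.subtree α = some (.ext Φ t') → Apply Φ (ev (α ++ [1])) (ev α)) ∧
    (∀ t₁ t₂, t.subtree α = some (.union t₁ t₂) →
      UnionOf (ev (α ++ [1])) (ev (α ++ [2])) (ev α))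

namespace RL
variable {ν Ld Lb : Type}

lemma subtree_nil (t : OpTree ν Ld Lb) : t.subtree [] = some t := by cases t <;> rfl

lemma subtree_append (α β : List ℕ) (t : OpTree ν Ld Lb) :
    t.subtree (α ++ β) = (t.subtree α).bind (fun s => s.subtree β) := by
  induction α generalizing t with
  | nil => rw [List.nil_append, subtree_nil]; rfl
  | cons a α ih =>
    match t, a with
    | .phi, _ => cases ‹ℕ› <;> simp [OpTree.subtree]
    | .ext Φ s, 0 => rfl
    | .ext Φ s, 1 => exact ih s
    | .ext Φ s, (n+2) => simp [OpTree.subtree]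
    | .union s₁ s₂, 0 => rfl
    | .union s₁ s₂, 1 => exact ih s₁
    | .union s₁ s₂, 2 => exact ih s₂
    | .union s₁ s₂, (n+3) => rfl

lemma ops_subset {t : OpTree ν Ld Lb} {α : List ℕ} {s : OpTree ν Ld Lb}
    (hs : t.subtree α = some s) : s.ops ⊆ t.ops := by
  induction α generalizing t with
  | nil => rw [subtree_nil] at hs; cases hs; exact subset_rfl
  | cons a α ih =>
    match t, a, hs with
    | .ext Φ s', 1, hs => exact (ih hs).trans (Set.subset_insert _ _)
    | .union s₁ s₂, 1, hs => exact (ih hs).trans Set.subset_union_left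
    | .union s₁ s₂, 2, hs => exact (ih hs).trans Set.subset_union_right
    | .phi, _, hs => simp [OpTree.subtree] at hs
    | .ext Φ s', (n+2), hs => simp [OpTree.subtree] at hs

lemma addr_of_subtree {t : OpTree ν Ld Lb} {α : List ℕ} {s : OpTree ν Ld Lb}
    (hα : t.subtree α = some s) : t.Addr α := by
  unfold OpTree.Addr; rw [hα]; rfl

lemma wf_reach {t : OpTree ν Ld Lb} {G : PortGraph ν Ld Lb} {ev : List ℕ → PortGraph ν Ld Lb}
    (hops : ∀ Φ ∈ t.ops, Φ.R1 ∧ Φ.R2) (h : ConcreteEval t G ev) :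
    ∀ (s : OpTree ν Ld Lb) (α : List ℕ), t.subtree α = some s →
      (∀ e ∈ (ev α).E, e.1 ∈ (ev α).V ∧ e.2.2 ∈ (ev α).V) ∧
      (∀ v ∈ (ev α).port, v ∈ (ev α).V) ∧
      (∀ v ∈ (ev α).V, ∃ u ∈ (ev α).port, Relation.ReflTransGen (ev α).step u v) := by
  intro s
  induction s with
  | phi =>
    intro α hα
    obtain ⟨hVe, hEe, hpe⟩ := (h.2 α (addr_of_subtree hα)).2.1 hα
    refine ⟨?_, ?_, ?_⟩ <;> simp [hVe, hEe, hpe]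
  | ext Φ s ih =>
    intro α hα
    have hchild : t.subtree (α ++ [1]) = some s := by
      rw [subtree_append, hα]; simp [OpTree.subtree, subtree_nil]
    obtain ⟨hwfE, hwfP, hreach⟩ := ih (α ++ [1]) hchild
    have happ : Apply Φ (ev (α ++ [1])) (ev α) :=
      (h.2 α (addr_of_subtree hα)).2.2.1 Φ s hα
    obtain ⟨hR1, hR2⟩ := hops Φ (ops_subset hα (Set.mem_insert _ _))
    obtain ⟨hlen, Cv, G'', μ, hCW, hinj, hnew, hdock, hcont, hV, hE, hlab1, hlab2, hport⟩ := happ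
    obtain ⟨hC1, hC2, hG''V, hG''E, hG''lab, hG''port⟩ := hCW
    set H := ev (α ++ [1]) with hH
    set R := ev α with hR
    -- basic facts about the extension operation
    have notC_port : ∀ v ∈ Φ.port, v ∉ Φ.C := fun v hv hc => (Φ.C_sub hc).2 (Or.inl hv)
    have notC_dock : ∀ v ∈ Φ.dock, v ∉ Φ.C := fun v hv hc => (Φ.C_sub hc).2 (Or.inr hv)
    have hsingle : ∀ v, v ∈ Φ.V → v ∉ Φ.C → Cv v = {v} := hC1
    have hG''Vmem : ∀ v ∈ Φ.V, v ∉ Φ.C → v ∈ G''.V := by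
      intro v hv hc
      rw [hG''V]
      exact Set.mem_biUnion hv (by rw [hsingle v hv hc]; rfl)
    have hRport : ∀ v ∈ Φ.port, μ v ∈ R.port := by
      intro v hv
      rw [hport, hG''port]
      exact List.mem_map_of_mem (f := μ) hv
    have hstepR : ∀ x y : ν, H.step x y → R.step x y := by
      rintro x y ⟨ℓ, he⟩
      exact ⟨ℓ, by rw [hE]; exact Or.inl he⟩
    -- every (image of a) dock node is reachable from R.port in R
    have hdockreach : ∀ d ∈ Φ.dock, ∃ u ∈ R.port, Relation.ReflTransGen R.step u (μ d) := by
      intro d hd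
      by_cases hdp : d ∈ Φ.port
      · exact ⟨μ d, hRport d hdp, Relation.ReflTransGen.refl⟩
      · obtain ⟨e, heE, hetar⟩ := hR2 d hd hdp
        obtain ⟨a, ℓ, b⟩ := e
        simp only at hetar
        subst hetar
        have haNEW := hR1 _ heE
        have hap : a ∈ Φ.port := haNEW.1
        have haV : a ∈ Φ.V := Φ.port_sub a hap
        have hbV : b ∈ Φ.V := Φ.dock_sub b hd
        have hedge'' : (a, ℓ, b) ∈ G''.E := by
          rw [hG''E]
          exact ⟨a, ℓ, b, heE,
            by rw [hsingle a haV (notC_port a hap)]; rfl, rfl,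
            by rw [hsingle b hbV (notC_dock b hd)]; rfl⟩
        have hedgeR : (μ a, ℓ, μ b) ∈ R.E := by
          rw [hE]
          exact Or.inr ⟨(a, ℓ, b), hedge'', rfl⟩
        exact ⟨μ a, hRport a hap,
          Relation.ReflTransGen.single ⟨ℓ, hedgeR⟩⟩
    -- every node of H is reachable from R.port in R
    have hHreach : ∀ v ∈ H.V, ∃ u ∈ R.port, Relation.ReflTransGen R.step u v := by
      intro v hv
      obtain ⟨w, hw, hrtg⟩ := hreach v hv
      rw [← hdock] at hw
      obtain ⟨d, hd, rfl⟩ := List.mem_map.1 hw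
      obtain ⟨u, hu, hrtg'⟩ := hdockreach d hd
      exact ⟨u, hu, hrtg'.trans ((by apply Relation.ReflTransGen.mono hstepR; exact hrtg))⟩
    have hHsubV : H.V ⊆ R.V := by rw [hV]; exact Set.subset_union_left
    refine ⟨?_, ?_, ?_⟩
    · -- edges well-formed
      intro e he
      rw [hE] at he
      rcases he with he | ⟨e', he', rfl⟩
      · exact ⟨hHsubV (hwfE e he).1, hHsubV (hwfE e he).2⟩
      · rw [hG''E] at he'
        obtain ⟨u, ℓ, w, huw, h1, h2, h3⟩ := he'
        have huV : u ∈ Φ.V := (Φ.E_sub _ huw).1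
        have hwV : w ∈ Φ.V := (Φ.E_sub _ huw).2
        have : e'.1 ∈ G''.V := by rw [hG''V]; exact Set.mem_biUnion huV h1
        have h2' : e'.2.2 ∈ G''.V := by rw [hG''V]; exact Set.mem_biUnion hwV h3
        constructor
        · rw [hV]; exact Or.inr ⟨e'.1, this, rfl⟩
        · rw [hV]; exact Or.inr ⟨e'.2.2, h2', rfl⟩
    · -- ports well-formed
      intro v hv
      rw [hport, hG''port] at hv
      obtain ⟨p, hp, rfl⟩ := List.mem_map.1 hv
      have : p ∈ G''.V := hG''Vmem p (Φ.port_sub p hp) (notC_port p hp)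
      rw [hV]
      exact Or.inr ⟨p, this, rfl⟩
    · -- reachability
      intro v hv
      rw [hV] at hv
      rcases hv with hv | ⟨v', hv', rfl⟩
      · exact hHreach v hv
      · rw [hG''V] at hv'
        obtain ⟨w, hwV, hv'⟩ := Set.mem_iUnion₂.1 hv'
        by_cases hp : w ∈ Φ.port
        · have : v' = w := by rw [hsingle w hwV (notC_port w hp)] at hv'; exact hv'
          subst this
          exact ⟨μ v', hRport v' hp, Relation.ReflTransGen.refl⟩
        · by_cases hd : w ∈ Φ.dock
          · have : v' = w := by rw [hsingle w hwV (notC_dock w hd)] at hv'; exact hv'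
            subst this
            exact hdockreach v' hd
          · have hcw : w ∈ Φ.CONT := ⟨hwV, fun hmem => hmem.elim hp hd⟩
            exact hHreach _ (hcont w hcw v' hv').1
  | union s₁ s₂ ih₁ ih₂ =>
    intro α hα
    have hc1 : t.subtree (α ++ [1]) = some s₁ := by rw [subtree_append, hα]; simp [OpTree.subtree, subtree_nil]
    have hc2 : t.subtree (α ++ [2]) = some s₂ := by rw [subtree_append, hα]; simp [OpTree.subtree, subtree_nil]
    obtain ⟨hwfE₁, hwfP₁, hreach₁⟩ := ih₁ (α ++ [1]) hc1
    obtain ⟨hwfE₂, hwfP₂, hreach₂⟩ := ih₂ (α ++ [2]) hc2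
    obtain ⟨hdisj, hV, hE, hl1, hl2, hport⟩ :=
      (h.2 α (addr_of_subtree hα)).2.2.2 s₁ s₂ hα
    have hstep₁ : ∀ x y : ν, (ev (α ++ [1])).step x y → (ev α).step x y := by
      rintro x y ⟨ℓ, he⟩; exact ⟨ℓ, by rw [hE]; exact Or.inl he⟩
    have hstep₂ : ∀ x y : ν, (ev (α ++ [2])).step x y → (ev α).step x y := by
      rintro x y ⟨ℓ, he⟩; exact ⟨ℓ, by rw [hE]; exact Or.inr he⟩
    refine ⟨?_, ?_, ?_⟩
    · intro e he
      rw [hE] at he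
      rw [hV]
      rcases he with he | he
      · exact ⟨Or.inl (hwfE₁ e he).1, Or.inl (hwfE₁ e he).2⟩
      · exact ⟨Or.inr (hwfE₂ e he).1, Or.inr (hwfE₂ e he).2⟩
    · intro v hv
      rw [hport] at hv
      rw [hV]
      rcases List.mem_append.1 hv with hv | hv
      · exact Or.inl (hwfP₁ v hv)
      · exact Or.inr (hwfP₂ v hv)
    · intro v hv
      rw [hV] at hv
      rcases hv with hv | hv
      · obtain ⟨u, hu, hrtg⟩ := hreach₁ v hv
        exact ⟨u, by rw [hport]; exact List.mem_append.2 (Or.inl hu), (by apply Relation.ReflTransGen.mono hstep₁; exact hrtg)⟩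
      · obtain ⟨u, hu, hrtg⟩ := hreach₂ v hv
        exact ⟨u, by rw [hport]; exact List.mem_append.2 (Or.inr hu), (by apply Relation.ReflTransGen.mono hstep₂; exact hrtg)⟩

lemma closure {t : OpTree ν Ld Lb} {G : PortGraph ν Ld Lb} {ev : List ℕ → PortGraph ν Ld Lb}
    (hops : ∀ Φ ∈ t.ops, Φ.R1 ∧ Φ.R2) (h : ConcreteEval t G ev) :
    ∀ α, t.Addr α → ∀ e ∈ G.E, e.1 ∈ (ev α).V → e ∈ (ev α).E := by
  intro α
  induction α using List.reverseRecOn with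
  | nil => intro _ e he _; rw [h.1]; exact he
  | append_singleton β i ih =>
    intro hβi e he hv
    obtain ⟨s, hs⟩ := Option.isSome_iff_exists.1 hβi
    obtain ⟨s₀, hβ, h2⟩ : ∃ s₀, t.subtree β = some s₀ ∧ s₀.subtree [i] = some s :=
      Option.bind_eq_some_iff.mp ((subtree_append β [i] t).symm.trans hs)
    have hβaddr : t.Addr β := addr_of_subtree hβ
    match s₀, i, h2, hβ with
    | .ext Φ s', 1, h2, hβ =>
      have happ : Apply Φ (ev (β ++ [1])) (ev β) := (h.2 β hβaddr).2.2.1 Φ s' hβ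
      obtain ⟨hR1, _⟩ := hops Φ (ops_subset hβ (Set.mem_insert _ _))
      obtain ⟨hlen, Cv, G'', μ, hCW, hinj, hnew, hdock, hcont, hV, hE, hlab1, hlab2, hport⟩ := happ
      obtain ⟨hC1, hC2, hG''V, hG''E, hG''lab, hG''port⟩ := hCW
      have hv' : e.1 ∈ (ev β).V := by rw [hV]; exact Or.inl hv
      have heβ : e ∈ (ev β).E := ih hβaddr e he hv'
      rw [hE] at heβ
      rcases heβ with heβ | ⟨e', he', heq⟩
      · exact heβ
      · exfalso
        rw [hG''E] at he'
        obtain ⟨u, ℓ, w, huw, h1, _, _⟩ := he'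
        have huNEW : u ∈ Φ.NEW := hR1 _ huw
        have huV : u ∈ Φ.V := (Φ.E_sub _ huw).1
        have hunotC : u ∉ Φ.C := fun hc => (Φ.C_sub hc).2 (Or.inl huNEW.1)
        rw [hC1 u huV hunotC] at h1
        have : e.1 = μ u := by rw [heq, h1]
        exact hnew u huNEW (this ▸ hv)
    | .union s₁ s₂, 1, h2, hβ =>
      obtain ⟨hdisj, hV, hE, _, _, _⟩ := (h.2 β hβaddr).2.2.2 s₁ s₂ hβ
      have hv' : e.1 ∈ (ev β).V := by rw [hV]; exact Or.inl hv
      have heβ : e ∈ (ev β).E := ih hβaddr e he hv'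
      rw [hE] at heβ
      rcases heβ with heβ | heβ
      · exact heβ
      · exfalso
        have hc2 : t.subtree (β ++ [2]) = some s₂ := by
          rw [subtree_append, hβ]; simp [OpTree.subtree, subtree_nil]
        have := ((wf_reach hops h) s₂ (β ++ [2]) hc2).1 e heβ
        exact Set.disjoint_left.mp hdisj hv this.1
    | .union s₁ s₂, 2, h2, hβ =>
      obtain ⟨hdisj, hV, hE, _, _, _⟩ := (h.2 β hβaddr).2.2.2 s₁ s₂ hβ
      have hv' : e.1 ∈ (ev β).V := by rw [hV]; exact Or.inr hv
      have heβ : e ∈ (ev β).E := ih hβaddr e he hv'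
      rw [hE] at heβ
      rcases heβ with heβ | heβ
      · exfalso
        have hc1 : t.subtree (β ++ [1]) = some s₁ := by
          rw [subtree_append, hβ]; simp [OpTree.subtree, subtree_nil]
        have := ((wf_reach hops h) s₁ (β ++ [1]) hc1).1 e heβ
        exact Set.disjoint_left.mp hdisj this.1 hv
      · exact heβ
    | .phi, _, h2, hβ => simp [OpTree.subtree] at h2
    | .ext Φ s', (n+2), h2, hβ => simp [OpTree.subtree] at h2

end RL

/-- Reachability Lemma: in a concrete evaluation of `t` into `G`, every
`G_α` equals `G↓port_α`, the subgraph of `G` induced by the nodes reachable from `port_α`,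
with port sequence `port_α`. -/
theorem reachability_lemma {ν Ld Lb : Type} (t : OpTree ν Ld Lb)
    (G : PortGraph ν Ld Lb) (ev : List ℕ → PortGraph ν Ld Lb)
    (hops : ∀ Φ ∈ t.ops, Φ.R1 ∧ Φ.R2)
    (h : ConcreteEval t G ev) :
    ∀ α, t.Addr α →
      (ev α).V = G.reachSet (ev α).port ∧
      (ev α).E = {e | e ∈ G.E ∧ e.1 ∈ G.reachSet (ev α).port ∧
        e.2.2 ∈ G.reachSet (ev α).port} ∧
      (∀ v ∈ (ev α).V, (ev α).lab v = G.lab v) := by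
  intro α hα
  obtain ⟨s, hs⟩ := Option.isSome_iff_exists.1 hα
  obtain ⟨hwfE, hwfP, hreach⟩ := RL.wf_reach hops h s α hs
  obtain ⟨hsubV, hsubE, hsubL⟩ := (h.2 α hα).1
  have hstepG : ∀ x y : ν, (ev α).step x y → G.step x y := by
    rintro x y ⟨ℓ, he⟩; exact ⟨ℓ, hsubE he⟩
  have hclosed : ∀ e ∈ G.E, e.1 ∈ (ev α).V → e ∈ (ev α).E := RL.closure hops h α hα
  have hVeq : (ev α).V = G.reachSet (ev α).port := by
    apply Set.eq_of_subset_of_subset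
    · intro v hv
      obtain ⟨u, hu, hrtg⟩ := hreach v hv
      exact ⟨u, hu, (by apply Relation.ReflTransGen.mono hstepG; exact hrtg)⟩
    · rintro v ⟨u, hu, hrtg⟩
      induction hrtg with
      | refl => exact hwfP u hu
      | tail _ hstep ihr =>
        obtain ⟨ℓ, he⟩ := hstep
        exact (hwfE _ (hclosed _ he ihr)).2
  refine ⟨hVeq, ?_, hsubL⟩
  apply Set.eq_of_subset_of_subset
  · intro e he
    exact ⟨hsubE he, hVeq ▸ (hwfE e he).1, hVeq ▸ (hwfE e he).2⟩
  · rintro e ⟨he, h1, _⟩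
    exact hclosed e he (hVeq ▸ h1)
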